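/- Every acyclic quiver admits a reddening sequence. (Abstract version: if a class R of quivers contains all quivers with no arrows, is closed under mutation, and is closed under triangular extensions, then R contains all acyclic quivers.) -/

import Mathlib

/-- A quiver (finite directed multigraph without loops or 2-cycles), encoded as a
skew-symmetric integer matrix `B` on a finite vertex set: `B i j` is the number of
arrows `i → j` minus the number of arrows `j → i`. -/
structure Quiv where
  V : Type
  [fin : Fintype V]
  B : V → V → ℤ
  skew : ∀ i j, B i j = -(B j i)

attribute [instance] Quiv.fin

namespace Quiv

lemma sign_mul_max (a b : ℤ) :
    a.sign * max (a * b) 0 = b.sign * max (b * a) 0 := by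
  rcases lt_trichotomy (a * b) 0 with h | h | h
  · rw [max_eq_right h.le, mul_comm b a, max_eq_right h.le, mul_zero, mul_zero]
  · simp [h, mul_comm b a]
  · have h' : 0 < b * a := by rwa [mul_comm]
    rw [max_eq_left h.le, max_eq_left h'.le, mul_comm b a]
    rcases mul_pos_iff.mp h with ⟨ha, hb⟩ | ⟨ha, hb⟩
    · rw [Int.sign_eq_one_of_pos ha, Int.sign_eq_one_of_pos hb]
    · rw [Int.sign_eq_neg_one_of_neg ha, Int.sign_eq_neg_one_of_neg hb]

open Classical in
/-- Quiver mutation at the vertex `i`. -/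
noncomputable def mutate (Q : Quiv) (i : Q.V) : Quiv where
  V := Q.V
  fin := Q.fin
  B := fun j k =>
    if j = i ∨ k = i then -(Q.B j k)
    else Q.B j k + (Q.B j i).sign * max (Q.B j i * Q.B i k) 0
  skew := by
    intro j k
    try dsimp only
    by_cases h : j = i ∨ k = i
    · rw [if_pos h, if_pos (Or.symm h), Q.skew j k]
    · have h' : ¬(k = i ∨ j = i) := fun hc => h (Or.symm hc)
      rw [if_neg h, if_neg h', Q.skew k j, Q.skew k i, Q.skew i j]
      have hm : (-(Q.B i k)) * (-(Q.B j i)) = Q.B i k * Q.B j i := by ring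
      rw [hm, Int.sign_neg, sign_mul_max (Q.B j i) (Q.B i k)]
      ring

/-- `Arrow Q i j` means there is an arrow from `i` to `j`. -/
def Arrow (Q : Quiv) (i j : Q.V) : Prop := 0 < Q.B i j

/-- A quiver is acyclic if it has no directed cycles. -/
def Acyclic (Q : Quiv) : Prop := ∀ v, ¬ Relation.TransGen Q.Arrow v v

def IsSource (Q : Quiv) (i : Q.V) : Prop := ∀ j, ¬ Q.Arrow j i

def IsSink (Q : Quiv) (j : Q.V) : Prop := ∀ k, ¬ Q.Arrow j k

/-- The induced subquiver on a subset `S` of the vertices. -/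
noncomputable def restrict (Q : Quiv) (S : Set Q.V) : Quiv where
  V := S
  fin := Fintype.ofFinite S
  B := fun a b => Q.B a b
  skew := fun a b => Q.skew a b

/-- Deletion of the vertex `i` (induced subquiver on the complement). -/
noncomputable def delete (Q : Quiv) (i : Q.V) : Quiv := Q.restrict {v | v ≠ i}

/-- Iterated mutation along a list of vertices. -/
noncomputable def mutateSeq : (Q : Quiv) → List Q.V → Quiv
  | Q, [] => Q
  | Q, i :: l => mutateSeq (Q.mutate i) l
termination_by _ l => l.length
decreasing_by all_goals (simp; exact le_rfl)

/-- Isomorphism (relabeling of vertices) of quivers. -/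
def Iso (Q Q' : Quiv) : Prop :=
  ∃ e : Q.V ≃ Q'.V, ∀ a b, Q'.B (e a) (e b) = Q.B a b

/-- Mutation equivalence: `Q'` is obtained from `Q` by finitely many mutations,
up to relabeling of vertices. -/
def MutEquiv (Q Q' : Quiv) : Prop := ∃ l : List Q.V, Iso (Q.mutateSeq l) Q'

/-- `Q` is a triangular extension of `Q₁` and `Q₂`: `V(Q) = V(Q₁) ⊔ V(Q₂)`,
`Q₁` and `Q₂` are induced subquivers, and all remaining arrows go from
`V(Q₁)` to `V(Q₂)`. -/
def IsTriExt (Q Q₁ Q₂ : Quiv) : Prop :=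
  ∃ e : Q.V ≃ (Q₁.V ⊕ Q₂.V),
    (∀ a b : Q₁.V, Q.B (e.symm (Sum.inl a)) (e.symm (Sum.inl b)) = Q₁.B a b) ∧
    (∀ a b : Q₂.V, Q.B (e.symm (Sum.inr a)) (e.symm (Sum.inr b)) = Q₂.B a b) ∧
    (∀ (a : Q₁.V) (b : Q₂.V), 0 ≤ Q.B (e.symm (Sum.inl a)) (e.symm (Sum.inr b)))

/-- A covering pair: an arrow `i → j` which is not part of any bi-infinite path. -/
def CoveringPair (Q : Quiv) (i j : Q.V) : Prop :=
  Q.Arrow i j ∧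
    ¬ ∃ f : ℤ → Q.V, (∀ a : ℤ, Q.Arrow (f a) (f (a + 1))) ∧ ∃ a, f a = i ∧ f (a + 1) = j

end Quiv


/-- Every acyclic quiver admits a reddening sequence (abstract version): if a class
`R` of quivers contains all quivers with no arrows, is closed under mutation, and is
closed under triangular extensions, then `R` contains all acyclic quivers. -/
theorem acyclic_in_reddening_class
    (R : Quiv → Prop)
    (hNoArrows : ∀ Q : Quiv, (∀ a b, Q.B a b = 0) → R Q)
    (hMut : ∀ (Q : Quiv) (i : Q.V), R Q → R (Q.mutate i))
    (hTri : ∀ Q Q₁ Q₂ : Quiv, Q.IsTriExt Q₁ Q₂ → R Q₁ → R Q₂ → R Q) :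
    ∀ Q : Quiv, Q.Acyclic → R Q := by
  classical
  suffices h : ∀ n : ℕ, ∀ Q : Quiv, Fintype.card Q.V = n → Q.Acyclic → R Q by
    intro Q hQ; exact h _ Q rfl hQ
  intro n
  induction n using Nat.strong_induction_on with
  | _ n ih =>
    intro Q hcard hacyc
    rcases isEmpty_or_nonempty Q.V with hV | hV
    · exact hNoArrows Q (fun a b => hV.elim a)
    · -- Acyclic finite quiver has a source
      have htrans : IsTrans Q.V (Relation.TransGen Q.Arrow) := inferInstance
      have hirr : IsIrrefl Q.V (Relation.TransGen Q.Arrow) := ⟨fun a => hacyc a⟩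
      have hwf : WellFounded (Relation.TransGen Q.Arrow) :=
        Finite.wellFounded_of_trans_of_irrefl _
      obtain ⟨v, -, hvmin⟩ := hwf.has_min Set.univ ⟨hV.some, trivial⟩
      have hsource : Q.IsSource v := fun j hj =>
        hvmin j trivial (Relation.TransGen.single hj)
      -- decompose Q as triangular extension of {v} and delete v
      have hTriExt : Q.IsTriExt (Q.restrict {x | x = v}) (Q.delete v) := by
        refine ⟨(Equiv.sumCompl (· = v)).symm, ?_, ?_, ?_⟩
        · intro a b; rfl
        · intro a b; rfl
        · intro a b
          have ha : a.1 = v := a.2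
          have h1 : ¬ Q.Arrow b.1 v := hsource b.1
          have h2 : Q.B b.1 v ≤ 0 := not_lt.mp h1
          have h3 : Q.B v b.1 = -(Q.B b.1 v) := Q.skew _ _
          show 0 ≤ Q.B a.1 b.1
          rw [ha, h3]
          omega
      have hR1 : R (Q.restrict {x | x = v}) := by
        apply hNoArrows
        intro a b
        have ha : a.1 = v := a.2
        have hb : b.1 = v := b.2
        show Q.B a.1 b.1 = 0
        rw [ha, hb]
        have := Q.skew v v
        omega
      have hR2 : R (Q.delete v) := by
        have hcard2 : Fintype.card (Q.delete v).V < n := by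
          have h1 : @Fintype.card (Q.delete v).V (Q.delete v).fin
              = Fintype.card {x : Q.V // x ≠ v} :=
            Fintype.card_congr (Equiv.refl _)
          have h2 : Fintype.card {x : Q.V // x ≠ v} < Fintype.card Q.V :=
            Fintype.card_subtype_lt (x := v) (by simp)
          omega
        refine ih _ hcard2 (Q.delete v) rfl ?_
        intro w hw
        apply hacyc w.1
        exact Relation.TransGen.lift (fun x : (Q.delete v).V => x.1)
          (fun a b hab => hab) _ _ hw
      exact hTri Q _ _ hTriExt hR1 hR2
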